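/- arXiv:2007.03618 — 2 statements merged into one kernel-verified Lean document; each statement's English description precedes it below -/
import Mathlib

section
/- Let 0 < α < 1, let f : ℝ^k → ℝ be a C¹ function which is C² in a neighborhood of a point x_∞, and let {x_n} be a sequence in ℝ^k together with positive real numbers {δ_n} such that x_{n+1} = x_n − δ_n ∇f(x_n) and Armijo's condition f(x_{n+1}) − f(x_n) ≤ −α δ_n ‖∇f(x_n)‖² holds for all n. Assume that x_n converges to x_∞, that ∇f(x_∞) = 0, that the Hessian A = ∇²f(x_∞) (as a continuous linear map from ℝ^k to ℝ^k) is invertible, and that ∇f(x_n) ≠ 0 for all n. Then for every ε > 0 there exists n_ε such that for all n ≥ n_ε one has α δ_n ≤ ½ (‖A‖ + ε) · (‖A⁻¹‖ + ε)². -/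
open Filter Topology

lemma fderiv_apply_eq_inner_gradient {E : Type*} [NormedAddCommGroup E]
    [InnerProductSpace ℝ E] [CompleteSpace E] (f : E → ℝ) (y v : E) :
    fderiv ℝ f y v = (inner ℝ (gradient f y) v : ℝ) := by
  rw [show gradient f y = (InnerProductSpace.toDual ℝ E).symm (fderiv ℝ f y) from rfl]
  rw [InnerProductSpace.toDual_symm_apply]

lemma quad_upper_bound {E : Type*} [NormedAddCommGroup E]
    [InnerProductSpace ℝ E] [CompleteSpace E] (f : E → ℝ) (hf : ContDiff ℝ 1 f)
    (x₀ w : E) (L : ℝ)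
    (hbound : ∀ t ∈ Set.Icc (0:ℝ) 1,
      ‖gradient f (x₀ + t • (w - x₀))‖ ≤ L * (t * ‖w - x₀‖)) :
    f w - f x₀ ≤ L / 2 * ‖w - x₀‖ ^ 2 := by
  set v := w - x₀ with hv
  set h : ℝ → ℝ := fun t => L/2 * t^2 * ‖v‖^2 - f (x₀ + t • v) with hh
  have hd : ∀ t : ℝ, HasDerivAt h
      (L * t * ‖v‖^2 - (inner ℝ (gradient f (x₀ + t • v)) v : ℝ)) t := by
    intro t
    have hγ : HasDerivAt (fun t : ℝ => x₀ + t • v) v t := by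
      simpa using ((hasDerivAt_id t).smul_const v).const_add x₀
    have hφ : HasDerivAt (fun t : ℝ => f (x₀ + t • v)) (fderiv ℝ f (x₀ + t • v) v) t :=
      (hf.differentiable one_ne_zero (x₀ + t • v)).hasFDerivAt.comp_hasDerivAt t hγ
    have hq : HasDerivAt (fun t : ℝ => L/2*t^2*‖v‖^2) (L * t * ‖v‖^2) t := by
      have := ((hasDerivAt_pow 2 t).const_mul (L/2)).mul_const (‖v‖^2)
      exact this.congr_deriv (by ring)
    have := hq.sub hφ
    rw [fderiv_apply_eq_inner_gradient] at this
    exact this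
  have hmono : MonotoneOn h (Set.Icc 0 1) := by
    apply monotoneOn_of_deriv_nonneg (convex_Icc 0 1)
    · have hdiff : Differentiable ℝ h := fun t => (hd t).differentiableAt
      exact hdiff.continuous.continuousOn
    · exact fun t _ => ((hd t).differentiableAt.differentiableWithinAt)
    · intro t ht
      rw [interior_Icc] at ht
      rw [(hd t).deriv]
      have hb := hbound t ⟨ht.1.le, ht.2.le⟩
      have hi : (inner ℝ (gradient f (x₀ + t • v)) v : ℝ)
          ≤ ‖gradient f (x₀ + t • v)‖ * ‖v‖ := real_inner_le_norm _ _
      nlinarith [norm_nonneg v, ht.1.le, norm_nonneg (gradient f (x₀ + t • v))]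
  have h01 := hmono (Set.left_mem_Icc.2 zero_le_one) (Set.right_mem_Icc.2 zero_le_one)
    zero_le_one
  have e0 : h 0 = -f x₀ := by simp [hh]
  have e1 : h 1 = L/2 * ‖v‖^2 - f w := by simp [hh, hv]
  rw [e0, e1] at h01
  linarith

set_option maxHeartbeats 1000000 in
/-- If a sequence satisfying Armijo's condition converges to a non-degenerate critical
point `xlim` of a `C¹` function `f` (which is `C²` near `xlim`), then for every `ε > 0` the
learning rates eventually satisfy `α δ_n ≤ ½ (‖A‖ + ε)(‖A⁻¹‖ + ε)²`, where `A` is the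
Hessian of `f` at `xlim`. -/
theorem armijo_learning_rate_bound {k : ℕ} (α : ℝ) (hα0 : 0 < α) (hα1 : α < 1)
    (f : EuclideanSpace ℝ (Fin k) → ℝ) (hf : ContDiff ℝ 1 f)
    (xlim : EuclideanSpace ℝ (Fin k))
    (hf2 : ∃ u ∈ nhds xlim, ContDiffOn ℝ 2 f u)
    (x : ℕ → EuclideanSpace ℝ (Fin k)) (δ : ℕ → ℝ)
    (hδpos : ∀ n, 0 < δ n)
    (hupdate : ∀ n, x (n + 1) = x n - δ n • gradient f (x n))
    (harmijo : ∀ n, f (x (n + 1)) - f (x n) ≤ -α * δ n * ‖gradient f (x n)‖ ^ 2)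
    (hconv : Tendsto x atTop (nhds xlim))
    (hcrit : gradient f xlim = 0)
    (A : EuclideanSpace ℝ (Fin k) ≃L[ℝ] EuclideanSpace ℝ (Fin k))
    (hA : (A : EuclideanSpace ℝ (Fin k) →L[ℝ] EuclideanSpace ℝ (Fin k)) =
      fderiv ℝ (gradient f) xlim)
    (hgradne : ∀ n, gradient f (x n) ≠ 0) :
    ∀ ε > 0, ∃ nε : ℕ, ∀ n ≥ nε,
      α * δ n ≤ (1 / 2) *
        (‖(A : EuclideanSpace ℝ (Fin k) →L[ℝ] EuclideanSpace ℝ (Fin k))‖ + ε) *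
        (‖(A.symm : EuclideanSpace ℝ (Fin k) →L[ℝ] EuclideanSpace ℝ (Fin k))‖ + ε) ^ 2 := by
  intro ε hε
  have hEdef : EuclideanSpace ℝ (Fin k) = EuclideanSpace ℝ (Fin k) := rfl
  set NA := ‖(A : EuclideanSpace ℝ (Fin k) →L[ℝ] EuclideanSpace ℝ (Fin k))‖ with hNA
  set s := ‖(A.symm : EuclideanSpace ℝ (Fin k) →L[ℝ] EuclideanSpace ℝ (Fin k))‖ with hsdef
  have hNA0 : 0 ≤ NA := norm_nonneg _
  have hs0 : 0 ≤ s := norm_nonneg _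
  set c := min ε (ε / ((s+1) * (s+ε))) with hcdef
  have hD : 0 < (s+1) * (s+ε) := by positivity
  have hc0 : 0 < c := lt_min hε (div_pos hε hD)
  have hcε : c ≤ ε := min_le_left _ _
  have hc2 : c * ((s+1) * (s+ε)) ≤ ε := by
    calc c * ((s+1) * (s+ε)) ≤ (ε / ((s+1) * (s+ε))) * ((s+1) * (s+ε)) := by
          exact mul_le_mul_of_nonneg_right (min_le_right _ _) hD.le
      _ = ε := div_mul_cancel₀ _ hD.ne'
  have hcs : c * s * (s+ε) ≤ ε := by
    nlinarith [hc2, mul_nonneg hc0.le (show (0:ℝ) ≤ s + ε by positivity)]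
  -- differentiability of the gradient at xlim
  obtain ⟨u, hu, h2⟩ := hf2
  have hfd : DifferentiableAt ℝ (fderiv ℝ f) xlim :=
    ((h2.contDiffAt hu).fderiv_right (m := 1) (by norm_num)).differentiableAt one_ne_zero
  have hgd : DifferentiableAt ℝ (gradient f) xlim := by
    have heq : gradient f = fun y => (InnerProductSpace.toDual ℝ (EuclideanSpace ℝ (Fin k))).symm (fderiv ℝ f y) := rfl
    rw [heq]
    exact (((InnerProductSpace.toDual ℝ (EuclideanSpace ℝ (Fin k))).symm.toContinuousLinearEquiv :
      _ ≃L[ℝ] EuclideanSpace ℝ (Fin k)).differentiableAt).comp xlim hfd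
  have hder : HasFDerivAt (gradient f) (A : EuclideanSpace ℝ (Fin k) →L[ℝ] EuclideanSpace ℝ (Fin k)) xlim := hA ▸ hgd.hasFDerivAt
  have hlo : ∀ᶠ y in 𝓝 xlim, ‖gradient f y - (A : EuclideanSpace ℝ (Fin k) →L[ℝ] EuclideanSpace ℝ (Fin k)) (y - xlim)‖ ≤ c * ‖y - xlim‖ := by
    have := hder.isLittleO.def hc0
    filter_upwards [this] with y hy
    simpa [hcrit] using hy
  obtain ⟨r, hr, hball⟩ := Metric.eventually_nhds_iff.mp hlo
  -- pointwise estimates in the ball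
  have hupper : ∀ y : EuclideanSpace ℝ (Fin k), dist y xlim < r → ‖gradient f y‖ ≤ (NA + ε) * ‖y - xlim‖ := by
    intro y hy
    have h1 := hball hy
    have h2 : ‖(A : EuclideanSpace ℝ (Fin k) →L[ℝ] EuclideanSpace ℝ (Fin k)) (y - xlim)‖ ≤ NA * ‖y - xlim‖ :=
      (A : EuclideanSpace ℝ (Fin k) →L[ℝ] EuclideanSpace ℝ (Fin k)).le_opNorm _
    calc ‖gradient f y‖
        = ‖(gradient f y - (A : EuclideanSpace ℝ (Fin k) →L[ℝ] EuclideanSpace ℝ (Fin k)) (y - xlim)) + (A : EuclideanSpace ℝ (Fin k) →L[ℝ] EuclideanSpace ℝ (Fin k)) (y - xlim)‖ := by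
          congr 1; abel
      _ ≤ ‖gradient f y - (A : EuclideanSpace ℝ (Fin k) →L[ℝ] EuclideanSpace ℝ (Fin k)) (y - xlim)‖ + ‖(A : EuclideanSpace ℝ (Fin k) →L[ℝ] EuclideanSpace ℝ (Fin k)) (y - xlim)‖ :=
          norm_add_le _ _
      _ ≤ c * ‖y - xlim‖ + NA * ‖y - xlim‖ := add_le_add h1 h2
      _ ≤ (NA + ε) * ‖y - xlim‖ := by
          nlinarith [mul_nonneg (sub_nonneg.2 hcε) (norm_nonneg (y - xlim))]
  have hlower : ∀ y : EuclideanSpace ℝ (Fin k), dist y xlim < r → ‖y - xlim‖ ≤ (s + ε) * ‖gradient f y‖ := by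
    intro y hy
    have h1 := hball hy
    have h3 : ‖y - xlim‖ ≤ s * ‖(A : EuclideanSpace ℝ (Fin k) →L[ℝ] EuclideanSpace ℝ (Fin k)) (y - xlim)‖ := by
      have : (A.symm : EuclideanSpace ℝ (Fin k) →L[ℝ] EuclideanSpace ℝ (Fin k)) ((A : EuclideanSpace ℝ (Fin k) →L[ℝ] EuclideanSpace ℝ (Fin k)) (y - xlim)) = y - xlim := by
        simp
      calc ‖y - xlim‖ = ‖(A.symm : EuclideanSpace ℝ (Fin k) →L[ℝ] EuclideanSpace ℝ (Fin k)) ((A : EuclideanSpace ℝ (Fin k) →L[ℝ] EuclideanSpace ℝ (Fin k)) (y - xlim))‖ := by rw [this]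
        _ ≤ s * ‖(A : EuclideanSpace ℝ (Fin k) →L[ℝ] EuclideanSpace ℝ (Fin k)) (y - xlim)‖ := (A.symm : EuclideanSpace ℝ (Fin k) →L[ℝ] EuclideanSpace ℝ (Fin k)).le_opNorm _
    have h4 : ‖(A : EuclideanSpace ℝ (Fin k) →L[ℝ] EuclideanSpace ℝ (Fin k)) (y - xlim)‖ ≤ ‖gradient f y‖ + c * ‖y - xlim‖ := by
      calc ‖(A : EuclideanSpace ℝ (Fin k) →L[ℝ] EuclideanSpace ℝ (Fin k)) (y - xlim)‖
          = ‖gradient f y - (gradient f y - (A : EuclideanSpace ℝ (Fin k) →L[ℝ] EuclideanSpace ℝ (Fin k)) (y - xlim))‖ := by congr 1; abel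
        _ ≤ ‖gradient f y‖ + ‖gradient f y - (A : EuclideanSpace ℝ (Fin k) →L[ℝ] EuclideanSpace ℝ (Fin k)) (y - xlim)‖ := norm_sub_le _ _
        _ ≤ ‖gradient f y‖ + c * ‖y - xlim‖ := by linarith
    have h5 : ‖y - xlim‖ ≤ s * ‖gradient f y‖ + c * s * ‖y - xlim‖ := by
      have h6 := mul_le_mul_of_nonneg_left h4 hs0
      nlinarith [h3]
    have h1cs : c * s < 1 := by
      have h := min_le_right ε (ε / ((s+1) * (s+ε)))
      have h7 : c * s ≤ (ε / ((s+1) * (s+ε))) * s :=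
        mul_le_mul_of_nonneg_right h hs0
      have h8 : (ε / ((s+1) * (s+ε))) * s < 1 := by
        rw [div_mul_eq_mul_div, div_lt_one hD]
        nlinarith [hε, hs0, sq_nonneg s]
      linarith
    have hpos : 0 < 1 - c * s := by linarith
    have h9 : (1 - c * s) * ‖y - xlim‖ ≤ s * ‖gradient f y‖ := by nlinarith [h5]
    have h10 : s * ‖gradient f y‖ ≤ (1 - c * s) * ((s + ε) * ‖gradient f y‖) := by
      have h11 : s ≤ (1 - c * s) * (s + ε) := by nlinarith [hcs]
      have := mul_le_mul_of_nonneg_right h11 (norm_nonneg (gradient f y))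
      nlinarith [this]
    exact le_of_mul_le_mul_left (by linarith) hpos
  -- f (x n) ≥ f xlim
  have hanti : ∀ n, f (x (n+1)) ≤ f (x n) := by
    intro n
    have h1 := harmijo n
    nlinarith [mul_nonneg (mul_pos hα0 (hδpos n)).le (sq_nonneg ‖gradient f (x n)‖)]
  have hmono : ∀ n m, n ≤ m → f (x m) ≤ f (x n) := by
    intro n m hnm
    induction m with
    | zero => simpa [Nat.le_zero.mp hnm]
    | succ p ih =>
      rcases Nat.lt_or_ge n (p+1) with h | h
      · exact le_trans (hanti p) (ih (Nat.lt_succ_iff.mp h))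
      · have : n = p + 1 := le_antisymm hnm h
        simp [this]
  have hlim : Tendsto (fun n => f (x n)) atTop (𝓝 (f xlim)) :=
    (hf.continuous.continuousAt.tendsto).comp hconv
  have hge : ∀ n, f xlim ≤ f (x n) := by
    intro n
    exact le_of_tendsto hlim (eventually_atTop.2 ⟨n, fun m hm => hmono n m hm⟩)
  -- conclusion
  obtain ⟨N, hN⟩ := Metric.tendsto_atTop.mp hconv r hr
  refine ⟨N, fun n hn => ?_⟩
  have hxn : dist (x n) xlim < r := hN n hn
  set gn := gradient f (x n) with hgn
  have hquad : f (x n) - f xlim ≤ (NA + ε) / 2 * ‖x n - xlim‖ ^ 2 := by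
    apply quad_upper_bound f hf xlim (x n) (NA + ε)
    intro t ht
    have hdist : dist (xlim + t • (x n - xlim)) xlim < r := by
      rw [dist_eq_norm]
      have : xlim + t • (x n - xlim) - xlim = t • (x n - xlim) := by abel
      rw [this, norm_smul, Real.norm_eq_abs, abs_of_nonneg ht.1]
      calc t * ‖x n - xlim‖ ≤ 1 * ‖x n - xlim‖ :=
            mul_le_mul_of_nonneg_right ht.2 (norm_nonneg _)
        _ = ‖x n - xlim‖ := one_mul _
        _ = dist (x n) xlim := (dist_eq_norm _ _).symm
        _ < r := hxn
    have := hupper _ hdist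
    have heq : ‖xlim + t • (x n - xlim) - xlim‖ = t * ‖x n - xlim‖ := by
      have h' : xlim + t • (x n - xlim) - xlim = t • (x n - xlim) := by abel
      rw [h', norm_smul, Real.norm_eq_abs, abs_of_nonneg ht.1]
    rw [heq] at this
    exact this
  have harm : α * δ n * ‖gn‖ ^ 2 ≤ f (x n) - f (x (n+1)) := by
    have := harmijo n
    linarith
  have hlow := hlower (x n) hxn
  have hsq : ‖x n - xlim‖ ^ 2 ≤ ((s + ε) * ‖gn‖) ^ 2 := by
    apply pow_le_pow_left₀ (norm_nonneg _) hlow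
  have hg2 : 0 < ‖gn‖ ^ 2 := pow_pos (norm_pos_iff.mpr (hgradne n)) 2
  have hchain : α * δ n * ‖gn‖ ^ 2 ≤ (1/2 * (NA + ε) * (s + ε) ^ 2) * ‖gn‖ ^ 2 := by
    have h6 : f (x n) - f (x (n+1)) ≤ f (x n) - f xlim := by
      have := hge (n+1); linarith
    calc α * δ n * ‖gn‖ ^ 2 ≤ f (x n) - f xlim := le_trans harm h6
      _ ≤ (NA + ε) / 2 * ‖x n - xlim‖ ^ 2 := hquad
      _ ≤ (NA + ε) / 2 * ((s + ε) * ‖gn‖) ^ 2 := by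
          apply mul_le_mul_of_nonneg_left hsq (by positivity)
      _ = (1/2 * (NA + ε) * (s + ε) ^ 2) * ‖gn‖ ^ 2 := by ring
  exact le_of_mul_le_mul_right hchain hg2
end

section
/- Let 0 < α < 1, let f : ℝ^k → ℝ be a C¹ function which is C² in a neighborhood of a point x_∞, and let {x_n} be a sequence in ℝ^k with positive numbers {δ_n} such that x_{n+1} = x_n − δ_n ∇f(x_n) and f(x_{n+1}) − f(x_n) ≤ −α δ_n ‖∇f(x_n)‖² for all n. Assume that x_n converges to x_∞, that ∇f(x_∞) = 0, that the Hessian ∇²f(x_∞) is invertible, and that ∇f(x_n) ≠ 0 for all n. Then the sequence {δ_n} is bounded, i.e., there exists M > 0 with δ_n ≤ M for all n. -/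
open Filter Topology

/-- If a sequence satisfying Armijo's condition converges to a non-degenerate critical
point of a `C¹` function which is `C²` nearby, then the learning rates `δ n` are
bounded. -/
theorem armijo_learning_rates_bounded {k : ℕ} (α : ℝ) (hα0 : 0 < α) (hα1 : α < 1)
    (f : EuclideanSpace ℝ (Fin k) → ℝ) (hf : ContDiff ℝ 1 f)
    (xlim : EuclideanSpace ℝ (Fin k))
    (hf2 : ∃ u ∈ nhds xlim, ContDiffOn ℝ 2 f u)
    (x : ℕ → EuclideanSpace ℝ (Fin k)) (δ : ℕ → ℝ)
    (hδpos : ∀ n, 0 < δ n)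
    (hupdate : ∀ n, x (n + 1) = x n - δ n • gradient f (x n))
    (harmijo : ∀ n, f (x (n + 1)) - f (x n) ≤ -α * δ n * ‖gradient f (x n)‖ ^ 2)
    (hconv : Tendsto x atTop (nhds xlim))
    (hcrit : gradient f xlim = 0)
    (A : EuclideanSpace ℝ (Fin k) ≃L[ℝ] EuclideanSpace ℝ (Fin k))
    (hA : (A : EuclideanSpace ℝ (Fin k) →L[ℝ] EuclideanSpace ℝ (Fin k)) =
      fderiv ℝ (gradient f) xlim)
    (hgradne : ∀ n, gradient f (x n) ≠ 0) :
    ∃ M > 0, ∀ n, δ n ≤ M := by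
  classical
  -- norms of gradient and fderiv agree
  have hnormg : ∀ y, ‖fderiv ℝ f y‖ = ‖gradient f y‖ := by
    intro y
    rw [gradient]
    exact ((InnerProductSpace.toDual ℝ (EuclideanSpace ℝ (Fin k))).symm.norm_map _).symm
  -- constants
  obtain ⟨C, hCdef⟩ : ∃ C : ℝ, C = ‖((A.symm : EuclideanSpace ℝ (Fin k) →L[ℝ] EuclideanSpace ℝ (Fin k)))‖ + 1 := ⟨_, rfl⟩
  have hC0 : 0 < C := by
    rw [hCdef]
    have := norm_nonneg ((A.symm : EuclideanSpace ℝ (Fin k) →L[ℝ] EuclideanSpace ℝ (Fin k)))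
    linarith
  obtain ⟨c, hcdef⟩ : ∃ c : ℝ, c = 1 / (2 * C) := ⟨_, rfl⟩
  have hc0 : 0 < c := by
    rw [hcdef]
    apply one_div_pos.mpr
    linarith
  obtain ⟨L, hLdef⟩ : ∃ L : ℝ, L = ‖((A : EuclideanSpace ℝ (Fin k) →L[ℝ] EuclideanSpace ℝ (Fin k)))‖ + c := ⟨_, rfl⟩
  have hL0 : 0 < L := by
    rw [hLdef]
    have := norm_nonneg ((A : EuclideanSpace ℝ (Fin k) →L[ℝ] EuclideanSpace ℝ (Fin k)))
    linarith
  -- antilipschitz-type bound for A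
  have hAv : ∀ v : EuclideanSpace ℝ (Fin k), ‖v‖ ≤ C * ‖A v‖ := by
    intro v
    have h1 : ‖v‖ = ‖(A.symm : EuclideanSpace ℝ (Fin k) →L[ℝ] EuclideanSpace ℝ (Fin k)) ((A : EuclideanSpace ℝ (Fin k) →L[ℝ] EuclideanSpace ℝ (Fin k)) v)‖ := by simp
    have h2 := ContinuousLinearMap.le_opNorm (A.symm : EuclideanSpace ℝ (Fin k) →L[ℝ] EuclideanSpace ℝ (Fin k)) ((A : EuclideanSpace ℝ (Fin k) →L[ℝ] EuclideanSpace ℝ (Fin k)) v)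
    have h0 := norm_nonneg (A.symm : EuclideanSpace ℝ (Fin k) →L[ℝ] EuclideanSpace ℝ (Fin k))
    have h5 := norm_nonneg ((A : EuclideanSpace ℝ (Fin k) →L[ℝ] EuclideanSpace ℝ (Fin k)) v)
    have h3 : ‖(A.symm : EuclideanSpace ℝ (Fin k) →L[ℝ] EuclideanSpace ℝ (Fin k))‖ * ‖(A : EuclideanSpace ℝ (Fin k) →L[ℝ] EuclideanSpace ℝ (Fin k)) v‖ ≤ C * ‖(A : EuclideanSpace ℝ (Fin k) →L[ℝ] EuclideanSpace ℝ (Fin k)) v‖ := by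
      apply mul_le_mul_of_nonneg_right _ h5
      rw [hCdef]
      linarith
    have h4 : ‖(A : EuclideanSpace ℝ (Fin k) →L[ℝ] EuclideanSpace ℝ (Fin k)) v‖ = ‖A v‖ := rfl
    rw [h4] at h3
    rw [h1]
    calc ‖(A.symm : EuclideanSpace ℝ (Fin k) →L[ℝ] EuclideanSpace ℝ (Fin k)) ((A : EuclideanSpace ℝ (Fin k) →L[ℝ] EuclideanSpace ℝ (Fin k)) v)‖ ≤ ‖(A.symm : EuclideanSpace ℝ (Fin k) →L[ℝ] EuclideanSpace ℝ (Fin k))‖ * ‖(A : EuclideanSpace ℝ (Fin k) →L[ℝ] EuclideanSpace ℝ (Fin k)) v‖ := h2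
      _ ≤ C * ‖A v‖ := by rw [← h4]; exact h3
  -- the gradient is differentiable at xlim with derivative A
  obtain ⟨u, hu, hfu⟩ := hf2
  have hca : ContDiffAt ℝ 2 f xlim := hfu.contDiffAt hu
  have hd1 : DifferentiableAt ℝ (fderiv ℝ f) xlim :=
    (hca.fderiv_right (m := 1) le_rfl).differentiableAt one_ne_zero
  have hdg : DifferentiableAt ℝ (gradient f) xlim :=
    ((InnerProductSpace.toDual ℝ (EuclideanSpace ℝ (Fin k))).symm :
      StrongDual ℝ (EuclideanSpace ℝ (Fin k)) ≃ₗᵢ[ℝ]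
        EuclideanSpace ℝ (Fin k)).comp_differentiableAt_iff.mpr hd1
  have hfd : HasFDerivAt (gradient f)
      (A : EuclideanSpace ℝ (Fin k) →L[ℝ] EuclideanSpace ℝ (Fin k)) xlim := by
    rw [hA]; exact hdg.hasFDerivAt
  -- eventual estimate
  have hev : ∀ᶠ y in 𝓝 xlim, ‖gradient f y - A (y - xlim)‖ ≤ c * ‖y - xlim‖ := by
    have := hfd.isLittleO.def hc0
    filter_upwards [this] with y hy
    simpa only [hcrit, sub_zero, ContinuousLinearEquiv.coe_coe] using hy
  obtain ⟨r, hr0, hball⟩ : ∃ r > 0, ∀ y ∈ Metric.ball xlim r,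
      ‖gradient f y - A (y - xlim)‖ ≤ c * ‖y - xlim‖ := by
    rcases Metric.eventually_nhds_iff_ball.1 hev with ⟨r, hr0, h⟩
    exact ⟨r, hr0, h⟩
  -- lower and upper bounds on gradient in the ball
  have hlow : ∀ y ∈ Metric.ball xlim r, ‖y - xlim‖ ≤ 2 * C * ‖gradient f y‖ := by
    intro y hy
    have h1 := hball y hy
    have h2 := hAv (y - xlim)
    have h3 : ‖A (y - xlim)‖ ≤ ‖gradient f y‖ + c * ‖y - xlim‖ := by
      have ha := norm_sub_norm_le (A (y - xlim)) (gradient f y)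
      have hb : ‖A (y - xlim) - gradient f y‖ = ‖gradient f y - A (y - xlim)‖ := norm_sub_rev _ _
      linarith
    have h4 : ‖y - xlim‖ ≤ C * ‖gradient f y‖ + C * (c * ‖y - xlim‖) := by
      calc ‖y - xlim‖ ≤ C * ‖A (y - xlim)‖ := h2
        _ ≤ C * (‖gradient f y‖ + c * ‖y - xlim‖) := mul_le_mul_of_nonneg_left h3 hC0.le
        _ = C * ‖gradient f y‖ + C * (c * ‖y - xlim‖) := by ring
    have h5 : C * (c * ‖y - xlim‖) = (1 / 2) * ‖y - xlim‖ := by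
      rw [hcdef]; field_simp
    linarith
  have hup : ∀ y ∈ Metric.ball xlim r, ‖gradient f y‖ ≤ L * ‖y - xlim‖ := by
    intro y hy
    have h1 := hball y hy
    have h2 : gradient f y = A (y - xlim) + (gradient f y - A (y - xlim)) := by abel
    calc ‖gradient f y‖ = ‖A (y - xlim) + (gradient f y - A (y - xlim))‖ := by rw [← h2]
      _ ≤ ‖A (y - xlim)‖ + ‖gradient f y - A (y - xlim)‖ := norm_add_le _ _
      _ ≤ ‖(A : EuclideanSpace ℝ (Fin k) →L[ℝ] EuclideanSpace ℝ (Fin k))‖ * ‖y - xlim‖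
          + c * ‖y - xlim‖ := by
        have hop := (A : EuclideanSpace ℝ (Fin k) →L[ℝ] EuclideanSpace ℝ (Fin k)).le_opNorm
          (y - xlim)
        have hco : ‖(A : EuclideanSpace ℝ (Fin k) →L[ℝ] EuclideanSpace ℝ (Fin k)) (y - xlim)‖ = ‖A (y - xlim)‖ := rfl
        rw [hco] at hop
        linarith
      _ = L * ‖y - xlim‖ := by rw [hLdef]; ring
  -- quadratic bound on f near xlim
  have hquad : ∀ y ∈ Metric.ball xlim r, f y - f xlim ≤ L * ‖y - xlim‖ ^ 2 := by
    intro y hy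
    have hsub : Metric.closedBall xlim ‖y - xlim‖ ⊆ Metric.ball xlim r := by
      intro z hz
      rw [Metric.mem_closedBall] at hz
      rw [Metric.mem_ball] at hy ⊢
      rw [dist_eq_norm] at hy
      linarith
    have key : ‖f y - f xlim‖ ≤ (L * ‖y - xlim‖) * ‖y - xlim‖ := by
      apply (convex_closedBall xlim ‖y - xlim‖).norm_image_sub_le_of_norm_fderiv_le
        (fun z _ => (hf.differentiable one_ne_zero).differentiableAt)
        (fun z hz => ?_) (Metric.mem_closedBall_self (norm_nonneg _))
        (by rw [Metric.mem_closedBall, dist_eq_norm])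
      rw [hnormg]
      calc ‖gradient f z‖ ≤ L * ‖z - xlim‖ := hup z (hsub hz)
        _ ≤ L * ‖y - xlim‖ := by
            apply mul_le_mul_of_nonneg_left _ hL0.le
            rw [Metric.mem_closedBall, dist_eq_norm] at hz
            exact hz
    calc f y - f xlim ≤ ‖f y - f xlim‖ := le_abs_self _
      _ ≤ (L * ‖y - xlim‖) * ‖y - xlim‖ := key
      _ = L * ‖y - xlim‖ ^ 2 := by ring
  -- f (x n) is nonincreasing and ≥ f xlim
  have hdec : ∀ n, f (x (n + 1)) ≤ f (x n) := by
    intro n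
    have h1 := harmijo n
    have h2 : 0 ≤ α * δ n * ‖gradient f (x n)‖ ^ 2 :=
      mul_nonneg (mul_nonneg hα0.le (hδpos n).le) (sq_nonneg _)
    linarith
  have hmono : ∀ n m, n ≤ m → f (x m) ≤ f (x n) := by
    intro n m hnm
    induction m with
    | zero => rw [Nat.le_zero.mp hnm]
    | succ m ih =>
      rcases Nat.lt_or_ge n (m + 1) with h | h
      · exact le_trans (hdec m) (ih (Nat.lt_succ_iff.mp h))
      · have : n = m + 1 := le_antisymm hnm h
        rw [this]
  have hge : ∀ n, f xlim ≤ f (x n) := by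
    intro n
    have htend : Tendsto (fun m => f (x m)) atTop (𝓝 (f xlim)) :=
      (hf.continuous.tendsto xlim).comp hconv
    apply le_of_tendsto htend
    filter_upwards [eventually_ge_atTop n] with m hm
    exact hmono n m hm
  -- eventually in the ball
  obtain ⟨N, hN⟩ : ∃ N, ∀ n ≥ N, x n ∈ Metric.ball xlim r := by
    have hball' : ∀ᶠ y in 𝓝 xlim, y ∈ Metric.ball xlim r := Metric.ball_mem_nhds xlim hr0
    exact eventually_atTop.1 (hconv.eventually hball')
  -- bound for large n
  obtain ⟨M₁, hM₁def⟩ : ∃ M₁ : ℝ, M₁ = 4 * L * C ^ 2 / α := ⟨_, rfl⟩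
  have hM₁0 : 0 < M₁ := by
    rw [hM₁def]
    apply div_pos _ hα0
    nlinarith [mul_pos hL0 (pow_pos hC0 2)]
  have hlarge : ∀ n ≥ N, δ n ≤ M₁ := by
    intro n hn
    have hb := hN n hn
    have h1 : α * δ n * ‖gradient f (x n)‖ ^ 2 ≤ f (x n) - f (x (n + 1)) := by
      have := harmijo n; linarith
    have h2 : f (x n) - f (x (n + 1)) ≤ f (x n) - f xlim := by
      linarith [hge (n + 1)]
    have h3 : f (x n) - f xlim ≤ L * ‖x n - xlim‖ ^ 2 := hquad (x n) hb
    have h4 : ‖x n - xlim‖ ≤ 2 * C * ‖gradient f (x n)‖ := hlow (x n) hb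
    have h5 : L * ‖x n - xlim‖ ^ 2 ≤ L * (2 * C * ‖gradient f (x n)‖) ^ 2 := by
      apply mul_le_mul_of_nonneg_left _ hL0.le
      exact pow_le_pow_left₀ (norm_nonneg _) h4 2
    have h5' : L * (2 * C * ‖gradient f (x n)‖) ^ 2 = 4 * L * C ^ 2 * ‖gradient f (x n)‖ ^ 2 := by
      ring
    have h6 : α * δ n * ‖gradient f (x n)‖ ^ 2 ≤ 4 * L * C ^ 2 * ‖gradient f (x n)‖ ^ 2 := by
      linarith
    have hgpos : 0 < ‖gradient f (x n)‖ ^ 2 :=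
      pow_pos (norm_pos_iff.mpr (hgradne n)) 2
    have h7 : α * δ n ≤ 4 * L * C ^ 2 :=
      le_of_mul_le_mul_right (by linarith) hgpos
    rw [hM₁def, le_div_iff₀ hα0]
    linarith
  -- combine with the finitely many initial terms
  refine ⟨M₁ + ∑ i ∈ Finset.range N, δ i, ?_, ?_⟩
  · have : 0 ≤ ∑ i ∈ Finset.range N, δ i :=
      Finset.sum_nonneg fun i _ => (hδpos i).le
    linarith
  · intro n
    rcases Nat.lt_or_ge n N with h | h
    · have h1 : δ n ≤ ∑ i ∈ Finset.range N, δ i :=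
        Finset.single_le_sum (fun i _ => (hδpos i).le) (Finset.mem_range.mpr h)
      linarith
    · have h1 := hlarge n h
      have : 0 ≤ ∑ i ∈ Finset.range N, δ i :=
        Finset.sum_nonneg fun i _ => (hδpos i).le
      linarith
end
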